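/- For jointly distributed finite random variables X, Y_1, Y_2, W_2 satisfying the Markov chain W_2 ↔ X ↔ Y_1 ↔ Y_2, it holds that I(X; W_2 | Y_2) ≥ I(X; W_2 | Y_1); equivalently, degrading the side information from Y_1 to Y_2 cannot decrease the conditional mutual information with X. -/

import Mathlib

open scoped BigOperators

namespace SIScalable

variable {Ω : Type*} [Fintype Ω]

/-- Probability that a finite random variable `X` takes value `a`, under pmf `μ`. -/
noncomputable def pr (μ : Ω → ℝ) {A : Type*} [DecidableEq A] (X : Ω → A) (a : A) : ℝ :=
  ∑ ω, if X ω = a then μ ω else 0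

/-- `μ` is a probability mass function. -/
def IsPMF (μ : Ω → ℝ) : Prop := (∀ ω, 0 ≤ μ ω) ∧ ∑ ω, μ ω = 1

/-- Shannon entropy (in bits) of a finite random variable. -/
noncomputable def ent (μ : Ω → ℝ) {A : Type*} [Fintype A] [DecidableEq A] (X : Ω → A) : ℝ :=
  -∑ a : A, pr μ X a * Real.logb 2 (pr μ X a)

/-- Conditional Shannon entropy `H(X|Y)`. -/
noncomputable def condEnt (μ : Ω → ℝ) {A B : Type*} [Fintype A] [DecidableEq A]
    [Fintype B] [DecidableEq B] (X : Ω → A) (Y : Ω → B) : ℝ :=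
  ent μ (fun ω => (X ω, Y ω)) - ent μ Y

/-- Conditional mutual information `I(X;Y|Z)`. -/
noncomputable def cmi (μ : Ω → ℝ) {A B C : Type*} [Fintype A] [DecidableEq A]
    [Fintype B] [DecidableEq B] [Fintype C] [DecidableEq C]
    (X : Ω → A) (Y : Ω → B) (Z : Ω → C) : ℝ :=
  ent μ (fun ω => (X ω, Z ω)) + ent μ (fun ω => (Y ω, Z ω))
    - ent μ (fun ω => (X ω, Y ω, Z ω)) - ent μ Z

section Lemmas

variable {μ : Ω → ℝ}

lemma pr_nonneg (hμ : IsPMF μ) {A : Type*} [DecidableEq A] (X : Ω → A) (a : A) :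
    0 ≤ pr μ X a :=
  Finset.sum_nonneg fun ω _ => by split <;> simp [hμ.1 ω]

lemma pr_mono (hμ : IsPMF μ) {A B : Type*} [DecidableEq A] [DecidableEq B]
    (T : Ω → A) (S : Ω → B) (a : A) (b : B) (h : ∀ ω, T ω = a → S ω = b) :
    pr μ T a ≤ pr μ S b := by
  apply Finset.sum_le_sum
  intro ω _
  by_cases hT : T ω = a
  · rw [if_pos hT, if_pos (h ω hT)]
  · rw [if_neg hT]; split <;> simp [hμ.1 ω]

lemma pr_fiber {A B : Type*} [Fintype A] [DecidableEq A] [DecidableEq B]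
    (S : Ω → B) (T : Ω → A) (g : A → B) (h : ∀ ω, S ω = g (T ω)) (b : B) :
    pr μ S b = ∑ a, if g a = b then pr μ T a else 0 := by
  unfold pr
  have key : ∀ a : A, (if g a = b then ∑ ω, if T ω = a then μ ω else 0 else 0)
      = ∑ ω, if T ω = a ∧ g a = b then μ ω else 0 := by
    intro a
    split
    · apply Finset.sum_congr rfl; intro ω _; simp [*]
    · symm; apply Finset.sum_eq_zero; intro ω _; simp [*]
  rw [Finset.sum_congr rfl fun a _ => key a, Finset.sum_comm]
  apply Finset.sum_congr rfl
  intro ω _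
  rw [Finset.sum_eq_single (T ω)]
  · simp [h ω]
  · intro a _ ha; rw [if_neg]; rintro ⟨h1, -⟩; exact ha h1.symm
  · simp

lemma pr_total {A : Type*} [Fintype A] [DecidableEq A] (hμ : IsPMF μ) (T : Ω → A) :
    ∑ a, pr μ T a = 1 := by
  unfold pr
  rw [Finset.sum_comm, ← hμ.2]
  apply Finset.sum_congr rfl
  intro ω _
  rw [Finset.sum_eq_single (T ω)] <;> simp +contextual [eq_comm]

lemma pr_map_equiv {A B : Type*} [Fintype A] [DecidableEq A] [Fintype B] [DecidableEq B]
    (T : Ω → A) (S : Ω → B) (e : A ≃ B) (h : ∀ ω, S ω = e (T ω)) (b : B) :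
    pr μ S b = pr μ T (e.symm b) := by
  unfold pr
  apply Finset.sum_congr rfl
  intro ω _
  rw [h ω]
  congr 1
  simp [Equiv.apply_eq_iff_eq_symm_apply]

lemma ent_congr {A B : Type*} [Fintype A] [DecidableEq A] [Fintype B] [DecidableEq B]
    (T : Ω → A) (S : Ω → B) (e : A ≃ B) (h : ∀ ω, S ω = e (T ω)) :
    ent μ S = ent μ T := by
  unfold ent
  congr 1
  rw [← e.symm.sum_comp]
  apply Finset.sum_congr rfl
  intro b _
  rw [pr_map_equiv T S e h]

lemma pr_eq_zero_of (hμ : IsPMF μ) {A B : Type*} [DecidableEq A] [DecidableEq B]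
    (T : Ω → A) (S : Ω → B) (a : A) (b : B) (h : ∀ ω, T ω = a → S ω = b)
    (hS : pr μ S b = 0) : pr μ T a = 0 :=
  le_antisymm (hS ▸ pr_mono hμ T S a b h) (pr_nonneg hμ T a)

lemma gibbs_term {p pac pbc pc : ℝ} (hp : 0 ≤ p) (h1 : p ≤ pac) (h2 : p ≤ pbc) (h3 : p ≤ pc)
    (hac : 0 ≤ pac) (hbc : 0 ≤ pbc) :
    (p - pac * pbc / pc) / Real.log 2
      ≤ p * (Real.logb 2 p + Real.logb 2 pc - Real.logb 2 pac - Real.logb 2 pbc) := by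
  have hlog2 : 0 < Real.log 2 := Real.log_pos (by norm_num)
  rcases eq_or_lt_of_le hp with h | h
  · rw [← h]
    simp only [zero_mul, zero_sub]
    apply div_nonpos_of_nonpos_of_nonneg _ hlog2.le
    simp only [neg_nonpos]
    exact div_nonneg (mul_nonneg hac hbc) (le_trans hp h3)
  · have hac' : 0 < pac := lt_of_lt_of_le h h1
    have hbc' : 0 < pbc := lt_of_lt_of_le h h2
    have hc' : 0 < pc := lt_of_lt_of_le h h3
    have key : Real.log (pac * pbc / (p * pc)) ≤ pac * pbc / (p * pc) - 1 :=
      Real.log_le_sub_one_of_pos (by positivity)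
    have hlogs : Real.logb 2 p + Real.logb 2 pc - Real.logb 2 pac - Real.logb 2 pbc
        = -(Real.log (pac * pbc / (p * pc))) / Real.log 2 := by
      unfold Real.logb
      rw [Real.log_div (by positivity) (by positivity), Real.log_mul hac'.ne' hbc'.ne',
        Real.log_mul h.ne' hc'.ne']
      ring
    rw [hlogs]
    have heq : p * (pac * pbc / (p * pc) - 1) = pac * pbc / pc - p := by
      field_simp
    have hkey2 : p - pac * pbc / pc ≤ -(p * Real.log (pac * pbc / (p * pc))) := by
      nlinarith [mul_le_mul_of_nonneg_left key hp]
    calc (p - pac * pbc / pc) / Real.log 2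
        ≤ -(p * Real.log (pac * pbc / (p * pc))) / Real.log 2 :=
          (div_le_div_iff_of_pos_right hlog2).mpr hkey2
      _ = p * (-Real.log (pac * pbc / (p * pc)) / Real.log 2) := by ring

lemma cmi_eq {A B C : Type*} [Fintype A] [DecidableEq A] [Fintype B] [DecidableEq B]
    [Fintype C] [DecidableEq C] (X : Ω → A) (Y : Ω → B) (Z : Ω → C) :
    cmi μ X Y Z = ∑ a, ∑ b, ∑ c,
      pr μ (fun ω => (X ω, Y ω, Z ω)) (a, b, c) *
        (Real.logb 2 (pr μ (fun ω => (X ω, Y ω, Z ω)) (a, b, c))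
          + Real.logb 2 (pr μ Z c)
          - Real.logb 2 (pr μ (fun ω => (X ω, Z ω)) (a, c))
          - Real.logb 2 (pr μ (fun ω => (Y ω, Z ω)) (b, c))) := by
  set p : A → B → C → ℝ := fun a b c => pr μ (fun ω => (X ω, Y ω, Z ω)) (a, b, c) with hp
  have hXZ : ∀ a c, pr μ (fun ω => (X ω, Z ω)) (a, c) = ∑ b, p a b c := by
    intro a c
    rw [pr_fiber (fun ω => (X ω, Z ω)) (fun ω => (X ω, Y ω, Z ω))
      (fun t => (t.1, t.2.2)) (fun ω => rfl) (a, c)]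
    simp [Fintype.sum_prod_type, Prod.ext_iff, ite_and, Finset.sum_ite_eq, Finset.sum_ite_eq', hp]
  have hYZ : ∀ b c, pr μ (fun ω => (Y ω, Z ω)) (b, c) = ∑ a, p a b c := by
    intro b c
    rw [pr_fiber (fun ω => (Y ω, Z ω)) (fun ω => (X ω, Y ω, Z ω))
      (fun t => (t.2.1, t.2.2)) (fun ω => rfl) (b, c)]
    simp [Fintype.sum_prod_type, Prod.ext_iff, ite_and, Finset.sum_ite_eq, Finset.sum_ite_eq', hp]
  have hZ : ∀ c, pr μ Z c = ∑ a, ∑ b, p a b c := by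
    intro c
    rw [pr_fiber Z (fun ω => (X ω, Y ω, Z ω)) (fun t => t.2.2) (fun ω => rfl) c]
    simp [Fintype.sum_prod_type, Prod.ext_iff, ite_and, Finset.sum_ite_eq, Finset.sum_ite_eq', hp]
  have e1 : ent μ (fun ω => (X ω, Y ω, Z ω))
      = -∑ a, ∑ b, ∑ c, p a b c * Real.logb 2 (p a b c) := by
    unfold ent
    simp only [Fintype.sum_prod_type, hp]
  have e2 : ent μ (fun ω => (X ω, Z ω))
      = -∑ a, ∑ b, ∑ c, p a b c * Real.logb 2 (pr μ (fun ω => (X ω, Z ω)) (a, c)) := by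
    unfold ent
    simp only [Fintype.sum_prod_type]
    congr 1
    apply Finset.sum_congr rfl
    intro a _
    rw [Finset.sum_comm]
    apply Finset.sum_congr rfl
    intro c _
    rw [hXZ a c, Finset.sum_mul]
  have e3 : ent μ (fun ω => (Y ω, Z ω))
      = -∑ a, ∑ b, ∑ c, p a b c * Real.logb 2 (pr μ (fun ω => (Y ω, Z ω)) (b, c)) := by
    unfold ent
    simp only [Fintype.sum_prod_type]
    congr 1
    conv_rhs => rw [Finset.sum_comm]
    apply Finset.sum_congr rfl
    intro b _
    rw [Finset.sum_comm]
    apply Finset.sum_congr rfl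
    intro c _
    rw [hYZ b c, Finset.sum_mul]
  have e4 : ent μ Z = -∑ a, ∑ b, ∑ c, p a b c * Real.logb 2 (pr μ Z c) := by
    unfold ent
    congr 1
    have step : ∑ c, pr μ Z c * Real.logb 2 (pr μ Z c)
        = ∑ c, ∑ a, ∑ b, p a b c * Real.logb 2 (pr μ Z c) := by
      apply Finset.sum_congr rfl
      intro c _
      simp only [← Finset.sum_mul]
      rw [← hZ c]
    rw [step, Finset.sum_comm]
    apply Finset.sum_congr rfl
    intro a _
    rw [Finset.sum_comm]
  rw [show cmi μ X Y Z = ent μ (fun ω => (X ω, Z ω)) + ent μ (fun ω => (Y ω, Z ω))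
    - ent μ (fun ω => (X ω, Y ω, Z ω)) - ent μ Z from rfl, e1, e2, e3, e4]
  simp only [mul_add, mul_sub, Finset.sum_add_distrib, Finset.sum_sub_distrib]
  ring

lemma cmi_nonneg {A B C : Type*} [Fintype A] [DecidableEq A] [Fintype B] [DecidableEq B]
    [Fintype C] [DecidableEq C] (hμ : IsPMF μ) (X : Ω → A) (Y : Ω → B) (Z : Ω → C) :
    0 ≤ cmi μ X Y Z := by
  rw [cmi_eq]
  have hm1 : ∀ a b c, pr μ (fun ω => (X ω, Y ω, Z ω)) (a, b, c)
      ≤ pr μ (fun ω => (X ω, Z ω)) (a, c) := by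
    intro a b c
    apply pr_mono hμ
    intro ω hω
    simp only [Prod.mk.injEq] at hω ⊢
    tauto
  have hm2 : ∀ a b c, pr μ (fun ω => (X ω, Y ω, Z ω)) (a, b, c)
      ≤ pr μ (fun ω => (Y ω, Z ω)) (b, c) := by
    intro a b c
    apply pr_mono hμ
    intro ω hω
    simp only [Prod.mk.injEq] at hω ⊢
    tauto
  have hm3 : ∀ a b c, pr μ (fun ω => (X ω, Y ω, Z ω)) (a, b, c) ≤ pr μ Z c := by
    intro a b c
    apply pr_mono hμ
    intro ω hω
    simp only [Prod.mk.injEq] at hω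
    tauto
  have hZa : ∀ c, ∑ a, pr μ (fun ω => (X ω, Z ω)) (a, c) = pr μ Z c := by
    intro c
    rw [pr_fiber Z (fun ω => (X ω, Z ω)) (fun t => t.2) (fun ω => rfl) c]
    simp [Fintype.sum_prod_type, Prod.ext_iff, ite_and, Finset.sum_ite_eq, Finset.sum_ite_eq', Finset.sum_ite_irrel, Finset.sum_const_zero]
  have hZb : ∀ c, ∑ b, pr μ (fun ω => (Y ω, Z ω)) (b, c) = pr μ Z c := by
    intro c
    rw [pr_fiber Z (fun ω => (Y ω, Z ω)) (fun t => t.2) (fun ω => rfl) c]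
    simp [Fintype.sum_prod_type, Prod.ext_iff, ite_and, Finset.sum_ite_eq, Finset.sum_ite_eq', Finset.sum_ite_irrel, Finset.sum_const_zero]
  have hS1 : ∑ a, ∑ b, ∑ c, pr μ (fun ω => (X ω, Y ω, Z ω)) (a, b, c) = 1 := by
    have := pr_total hμ (fun ω => (X ω, Y ω, Z ω))
    simp only [Fintype.sum_prod_type] at this
    exact this
  have hS2 : ∑ a, ∑ b, ∑ c, pr μ (fun ω => (X ω, Z ω)) (a, c)
      * pr μ (fun ω => (Y ω, Z ω)) (b, c) / pr μ Z c = 1 := by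
    have r1 : ∑ a : A, ∑ b : B, ∑ c : C, pr μ (fun ω => (X ω, Z ω)) (a, c)
        * pr μ (fun ω => (Y ω, Z ω)) (b, c) / pr μ Z c
        = ∑ c : C, ∑ a : A, ∑ b : B, pr μ (fun ω => (X ω, Z ω)) (a, c)
        * pr μ (fun ω => (Y ω, Z ω)) (b, c) / pr μ Z c := by
      rw [show (∑ a : A, ∑ b : B, ∑ c : C, pr μ (fun ω => (X ω, Z ω)) (a, c)
        * pr μ (fun ω => (Y ω, Z ω)) (b, c) / pr μ Z c)
        = ∑ a : A, ∑ c : C, ∑ b : B, pr μ (fun ω => (X ω, Z ω)) (a, c)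
        * pr μ (fun ω => (Y ω, Z ω)) (b, c) / pr μ Z c
        from Finset.sum_congr rfl fun a _ => Finset.sum_comm, Finset.sum_comm]
    rw [r1, ← pr_total hμ Z]
    apply Finset.sum_congr rfl
    intro c _
    have expand : ∑ a : A, ∑ b : B, pr μ (fun ω => (X ω, Z ω)) (a, c)
        * pr μ (fun ω => (Y ω, Z ω)) (b, c) / pr μ Z c
        = (∑ a : A, pr μ (fun ω => (X ω, Z ω)) (a, c))
          * (∑ b : B, pr μ (fun ω => (Y ω, Z ω)) (b, c)) / pr μ Z c := by
      simp only [Finset.sum_mul, Finset.mul_sum, Finset.sum_div]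
      rw [Finset.sum_comm]
    rw [expand, hZa, hZb]
    rcases eq_or_ne (pr μ Z c) 0 with h0 | h0
    · rw [h0]; simp
    · field_simp
  have key : (0 : ℝ) = (∑ a, ∑ b, ∑ c, (pr μ (fun ω => (X ω, Y ω, Z ω)) (a, b, c)
      - pr μ (fun ω => (X ω, Z ω)) (a, c) * pr μ (fun ω => (Y ω, Z ω)) (b, c) / pr μ Z c))
        / Real.log 2 := by
    simp only [Finset.sum_sub_distrib]
    rw [hS1, hS2]
    simp
  rw [key]
  simp only [Finset.sum_div]
  apply Finset.sum_le_sum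
  intro a _
  apply Finset.sum_le_sum
  intro b _
  apply Finset.sum_le_sum
  intro c _
  exact gibbs_term (pr_nonneg hμ _ _) (hm1 a b c) (hm2 a b c) (hm3 a b c)
    (pr_nonneg hμ _ _) (pr_nonneg hμ _ _)

lemma cmi_eq_zero {A B C : Type*} [Fintype A] [DecidableEq A] [Fintype B] [DecidableEq B]
    [Fintype C] [DecidableEq C] (hμ : IsPMF μ) (X : Ω → A) (Y : Ω → B) (Z : Ω → C)
    (h : ∀ a b c, pr μ (fun ω => (X ω, Y ω, Z ω)) (a, b, c) * pr μ Z c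
      = pr μ (fun ω => (X ω, Z ω)) (a, c) * pr μ (fun ω => (Y ω, Z ω)) (b, c)) :
    cmi μ X Y Z = 0 := by
  rw [cmi_eq]
  apply Finset.sum_eq_zero
  intro a _
  apply Finset.sum_eq_zero
  intro b _
  apply Finset.sum_eq_zero
  intro c _
  rcases eq_or_lt_of_le (pr_nonneg hμ (fun ω => (X ω, Y ω, Z ω)) (a, b, c)) with h0 | h0
  · rw [← h0, zero_mul]
  · have hac : 0 < pr μ (fun ω => (X ω, Z ω)) (a, c) :=
      lt_of_lt_of_le h0 (pr_mono hμ _ _ _ _ (fun ω hω => by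
        simp only [Prod.mk.injEq] at hω ⊢; tauto))
    have hbc : 0 < pr μ (fun ω => (Y ω, Z ω)) (b, c) :=
      lt_of_lt_of_le h0 (pr_mono hμ _ _ _ _ (fun ω hω => by
        simp only [Prod.mk.injEq] at hω ⊢; tauto))
    have hc : 0 < pr μ Z c :=
      lt_of_lt_of_le h0 (pr_mono hμ _ _ _ _ (fun ω hω => by
        simp only [Prod.mk.injEq] at hω; tauto))
    have hlogs : Real.logb 2 (pr μ (fun ω => (X ω, Y ω, Z ω)) (a, b, c)) + Real.logb 2 (pr μ Z c)
        = Real.logb 2 (pr μ (fun ω => (X ω, Z ω)) (a, c))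
          + Real.logb 2 (pr μ (fun ω => (Y ω, Z ω)) (b, c)) := by
      rw [← Real.logb_mul h0.ne' hc.ne', h a b c, Real.logb_mul hac.ne' hbc.ne']
    rw [show ∀ x y z w : ℝ, x + y - z - w = (x + y) - (z + w) from fun _ _ _ _ => by ring,
      hlogs, sub_self, mul_zero]

end Lemmas

/-- If W₂ ↔ X ↔ Y₁ ↔ Y₂ is a Markov chain then
I(X;W₂|Y₂) ≥ I(X;W₂|Y₁). -/
theorem degraded_side_info_increases_cmi
    {Ω 𝒳 𝒴₁ 𝒴₂ 𝒲₂ : Type*} [Fintype Ω]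
    [Fintype 𝒳] [DecidableEq 𝒳] [Fintype 𝒴₁] [DecidableEq 𝒴₁]
    [Fintype 𝒴₂] [DecidableEq 𝒴₂] [Fintype 𝒲₂] [DecidableEq 𝒲₂]
    (μ : Ω → ℝ) (hμ : IsPMF μ)
    (X : Ω → 𝒳) (Y₁ : Ω → 𝒴₁) (Y₂ : Ω → 𝒴₂) (W₂ : Ω → 𝒲₂)
    (hMarkov : ∀ (w₂ : 𝒲₂) (x : 𝒳) (y₁ : 𝒴₁) (y₂ : 𝒴₂),
      pr μ (fun ω => (W₂ ω, X ω, Y₁ ω, Y₂ ω)) (w₂, x, y₁, y₂)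
          * pr μ X x * pr μ Y₁ y₁
        = pr μ (fun ω => (W₂ ω, X ω)) (w₂, x)
          * pr μ (fun ω => (X ω, Y₁ ω)) (x, y₁)
          * pr μ (fun ω => (Y₁ ω, Y₂ ω)) (y₁, y₂)) :
    cmi μ X W₂ Y₁ ≤ cmi μ X W₂ Y₂ := by
  -- abbreviations are spelled out; q denotes the full joint
  -- marginalization identities
  have sR : ∀ x y₁ y₂, pr μ (fun ω => (X ω, Y₁ ω, Y₂ ω)) (x, y₁, y₂)
      = ∑ w, pr μ (fun ω => (W₂ ω, X ω, Y₁ ω, Y₂ ω)) (w, x, y₁, y₂) := by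
    intro x y₁ y₂
    rw [pr_fiber (fun ω => (X ω, Y₁ ω, Y₂ ω)) (fun ω => (W₂ ω, X ω, Y₁ ω, Y₂ ω))
      (fun t => (t.2.1, t.2.2.1, t.2.2.2)) (fun ω => rfl) (x, y₁, y₂)]
    simp [Fintype.sum_prod_type, Prod.ext_iff, ite_and, Finset.sum_ite_eq, Finset.sum_ite_eq', Finset.sum_ite_irrel, Finset.sum_const_zero]
  have sCA : ∀ x, pr μ X x = ∑ w, pr μ (fun ω => (W₂ ω, X ω)) (w, x) := by
    intro x
    rw [pr_fiber X (fun ω => (W₂ ω, X ω)) (fun t => t.2) (fun ω => rfl) x]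
    simp [Fintype.sum_prod_type, Prod.ext_iff, ite_and, Finset.sum_ite_eq, Finset.sum_ite_eq', Finset.sum_ite_irrel, Finset.sum_const_zero]
  have sG : ∀ w x y₁, pr μ (fun ω => (W₂ ω, X ω, Y₁ ω)) (w, x, y₁)
      = ∑ y₂, pr μ (fun ω => (W₂ ω, X ω, Y₁ ω, Y₂ ω)) (w, x, y₁, y₂) := by
    intro w x y₁
    rw [pr_fiber (fun ω => (W₂ ω, X ω, Y₁ ω)) (fun ω => (W₂ ω, X ω, Y₁ ω, Y₂ ω))
      (fun t => (t.1, t.2.1, t.2.2.1)) (fun ω => rfl) (w, x, y₁)]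
    simp [Fintype.sum_prod_type, Prod.ext_iff, ite_and, Finset.sum_ite_eq, Finset.sum_ite_eq', Finset.sum_ite_irrel, Finset.sum_const_zero]
    rw [Finset.sum_comm]
    simp
  have sDR : ∀ x y₁, pr μ (fun ω => (X ω, Y₁ ω)) (x, y₁)
      = ∑ y₂, pr μ (fun ω => (X ω, Y₁ ω, Y₂ ω)) (x, y₁, y₂) := by
    intro x y₁
    rw [pr_fiber (fun ω => (X ω, Y₁ ω)) (fun ω => (X ω, Y₁ ω, Y₂ ω))
      (fun t => (t.1, t.2.1)) (fun ω => rfl) (x, y₁)]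
    simp [Fintype.sum_prod_type, Prod.ext_iff, ite_and, Finset.sum_ite_eq, Finset.sum_ite_eq', Finset.sum_ite_irrel, Finset.sum_const_zero]
    rw [Finset.sum_comm]
    simp
  have sK : ∀ w x y₂, pr μ (fun ω => (W₂ ω, X ω, Y₂ ω)) (w, x, y₂)
      = ∑ y₁, pr μ (fun ω => (W₂ ω, X ω, Y₁ ω, Y₂ ω)) (w, x, y₁, y₂) := by
    intro w x y₂
    rw [pr_fiber (fun ω => (W₂ ω, X ω, Y₂ ω)) (fun ω => (W₂ ω, X ω, Y₁ ω, Y₂ ω))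
      (fun t => (t.1, t.2.1, t.2.2.2)) (fun ω => rfl) (w, x, y₂)]
    simp [Fintype.sum_prod_type, Prod.ext_iff, ite_and, Finset.sum_ite_eq, Finset.sum_ite_eq', Finset.sum_ite_irrel, Finset.sum_const_zero]
  have sH : ∀ x y₂, pr μ (fun ω => (X ω, Y₂ ω)) (x, y₂)
      = ∑ y₁, pr μ (fun ω => (X ω, Y₁ ω, Y₂ ω)) (x, y₁, y₂) := by
    intro x y₂
    rw [pr_fiber (fun ω => (X ω, Y₂ ω)) (fun ω => (X ω, Y₁ ω, Y₂ ω))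
      (fun t => (t.1, t.2.2)) (fun ω => rfl) (x, y₂)]
    simp [Fintype.sum_prod_type, Prod.ext_iff, ite_and, Finset.sum_ite_eq, Finset.sum_ite_eq', Finset.sum_ite_irrel, Finset.sum_const_zero]
  have sM : ∀ w y₁ y₂, pr μ (fun ω => (W₂ ω, Y₁ ω, Y₂ ω)) (w, y₁, y₂)
      = ∑ x, pr μ (fun ω => (W₂ ω, X ω, Y₁ ω, Y₂ ω)) (w, x, y₁, y₂) := by
    intro w y₁ y₂
    rw [pr_fiber (fun ω => (W₂ ω, Y₁ ω, Y₂ ω)) (fun ω => (W₂ ω, X ω, Y₁ ω, Y₂ ω))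
      (fun t => (t.1, t.2.2.1, t.2.2.2)) (fun ω => rfl) (w, y₁, y₂)]
    simp [Fintype.sum_prod_type, Prod.ext_iff, ite_and, Finset.sum_ite_eq, Finset.sum_ite_eq', Finset.sum_ite_irrel, Finset.sum_const_zero]
  have sN : ∀ w y₁, pr μ (fun ω => (W₂ ω, Y₁ ω)) (w, y₁)
      = ∑ x, pr μ (fun ω => (W₂ ω, X ω, Y₁ ω)) (w, x, y₁) := by
    intro w y₁
    rw [pr_fiber (fun ω => (W₂ ω, Y₁ ω)) (fun ω => (W₂ ω, X ω, Y₁ ω))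
      (fun t => (t.1, t.2.2)) (fun ω => rfl) (w, y₁)]
    simp [Fintype.sum_prod_type, Prod.ext_iff, ite_and, Finset.sum_ite_eq, Finset.sum_ite_eq', Finset.sum_ite_irrel, Finset.sum_const_zero]
  -- reorder identities
  have r1 : ∀ w x y₁ y₂, pr μ (fun ω => (W₂ ω, Y₂ ω, X ω, Y₁ ω)) (w, y₂, x, y₁)
      = pr μ (fun ω => (W₂ ω, X ω, Y₁ ω, Y₂ ω)) (w, x, y₁, y₂) := by
    intro w x y₁ y₂
    rw [pr_fiber (fun ω => (W₂ ω, Y₂ ω, X ω, Y₁ ω)) (fun ω => (W₂ ω, X ω, Y₁ ω, Y₂ ω))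
      (fun t => (t.1, t.2.2.2, t.2.1, t.2.2.1)) (fun ω => rfl) (w, y₂, x, y₁)]
    simp [Fintype.sum_prod_type, Prod.ext_iff, ite_and, Finset.sum_ite_eq, Finset.sum_ite_eq', Finset.sum_ite_irrel, Finset.sum_const_zero]
  have r2 : ∀ x y₁ y₂, pr μ (fun ω => (Y₂ ω, X ω, Y₁ ω)) (y₂, x, y₁)
      = pr μ (fun ω => (X ω, Y₁ ω, Y₂ ω)) (x, y₁, y₂) := by
    intro x y₁ y₂
    rw [pr_fiber (fun ω => (Y₂ ω, X ω, Y₁ ω)) (fun ω => (X ω, Y₁ ω, Y₂ ω))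
      (fun t => (t.2.2, t.1, t.2.1)) (fun ω => rfl) (y₂, x, y₁)]
    simp [Fintype.sum_prod_type, Prod.ext_iff, ite_and, Finset.sum_ite_eq, Finset.sum_ite_eq', Finset.sum_ite_irrel, Finset.sum_const_zero]
  have r3 : ∀ w x y₁ y₂, pr μ (fun ω => (W₂ ω, Y₁ ω, X ω, Y₂ ω)) (w, y₁, x, y₂)
      = pr μ (fun ω => (W₂ ω, X ω, Y₁ ω, Y₂ ω)) (w, x, y₁, y₂) := by
    intro w x y₁ y₂
    rw [pr_fiber (fun ω => (W₂ ω, Y₁ ω, X ω, Y₂ ω)) (fun ω => (W₂ ω, X ω, Y₁ ω, Y₂ ω))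
      (fun t => (t.1, t.2.2.1, t.2.1, t.2.2.2)) (fun ω => rfl) (w, y₁, x, y₂)]
    simp [Fintype.sum_prod_type, Prod.ext_iff, ite_and, Finset.sum_ite_eq, Finset.sum_ite_eq', Finset.sum_ite_irrel, Finset.sum_const_zero]
  have r4 : ∀ x y₁ y₂, pr μ (fun ω => (Y₁ ω, X ω, Y₂ ω)) (y₁, x, y₂)
      = pr μ (fun ω => (X ω, Y₁ ω, Y₂ ω)) (x, y₁, y₂) := by
    intro x y₁ y₂
    rw [pr_fiber (fun ω => (Y₁ ω, X ω, Y₂ ω)) (fun ω => (X ω, Y₁ ω, Y₂ ω))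
      (fun t => (t.2.1, t.1, t.2.2)) (fun ω => rfl) (y₁, x, y₂)]
    simp [Fintype.sum_prod_type, Prod.ext_iff, ite_and, Finset.sum_ite_eq, Finset.sum_ite_eq', Finset.sum_ite_irrel, Finset.sum_const_zero]
  have r5 : ∀ w y₁ y₂, pr μ (fun ω => (W₂ ω, Y₂ ω, Y₁ ω)) (w, y₂, y₁)
      = pr μ (fun ω => (W₂ ω, Y₁ ω, Y₂ ω)) (w, y₁, y₂) := by
    intro w y₁ y₂
    rw [pr_fiber (fun ω => (W₂ ω, Y₂ ω, Y₁ ω)) (fun ω => (W₂ ω, Y₁ ω, Y₂ ω))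
      (fun t => (t.1, t.2.2, t.2.1)) (fun ω => rfl) (w, y₂, y₁)]
    simp [Fintype.sum_prod_type, Prod.ext_iff, ite_and, Finset.sum_ite_eq, Finset.sum_ite_eq', Finset.sum_ite_irrel, Finset.sum_const_zero]
  have r6 : ∀ y₁ y₂, pr μ (fun ω => (Y₂ ω, Y₁ ω)) (y₂, y₁)
      = pr μ (fun ω => (Y₁ ω, Y₂ ω)) (y₁, y₂) := by
    intro y₁ y₂
    rw [pr_fiber (fun ω => (Y₂ ω, Y₁ ω)) (fun ω => (Y₁ ω, Y₂ ω))
      (fun t => (t.2, t.1)) (fun ω => rfl) (y₂, y₁)]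
    simp [Fintype.sum_prod_type, Prod.ext_iff, ite_and, Finset.sum_ite_eq, Finset.sum_ite_eq', Finset.sum_ite_irrel, Finset.sum_const_zero]
  -- zero-extraction facts
  have zqA : ∀ w x y₁ y₂, pr μ X x = 0 →
      pr μ (fun ω => (W₂ ω, X ω, Y₁ ω, Y₂ ω)) (w, x, y₁, y₂) = 0 := fun w x y₁ y₂ h0 =>
    pr_eq_zero_of hμ _ X _ x (fun ω h => by
      simp only [Prod.mk.injEq] at h; tauto) h0
  have zqB : ∀ w x y₁ y₂, pr μ Y₁ y₁ = 0 →
      pr μ (fun ω => (W₂ ω, X ω, Y₁ ω, Y₂ ω)) (w, x, y₁, y₂) = 0 := fun w x y₁ y₂ h0 =>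
    pr_eq_zero_of hμ _ Y₁ _ y₁ (fun ω h => by
      simp only [Prod.mk.injEq] at h; tauto) h0
  have zCA : ∀ w x, pr μ X x = 0 → pr μ (fun ω => (W₂ ω, X ω)) (w, x) = 0 := fun w x h0 =>
    pr_eq_zero_of hμ _ X _ x (fun ω h => by
      simp only [Prod.mk.injEq] at h; tauto) h0
  have zRB : ∀ x y₁ y₂, pr μ Y₁ y₁ = 0 →
      pr μ (fun ω => (X ω, Y₁ ω, Y₂ ω)) (x, y₁, y₂) = 0 := fun x y₁ y₂ h0 =>
    pr_eq_zero_of hμ _ Y₁ _ y₁ (fun ω h => by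
      simp only [Prod.mk.injEq] at h; tauto) h0
  have zGA : ∀ w x y₁, pr μ X x = 0 →
      pr μ (fun ω => (W₂ ω, X ω, Y₁ ω)) (w, x, y₁) = 0 := fun w x y₁ h0 =>
    pr_eq_zero_of hμ _ X _ x (fun ω h => by
      simp only [Prod.mk.injEq] at h; tauto) h0
  have zKA : ∀ w x y₂, pr μ X x = 0 →
      pr μ (fun ω => (W₂ ω, X ω, Y₂ ω)) (w, x, y₂) = 0 := fun w x y₂ h0 =>
    pr_eq_zero_of hμ _ X _ x (fun ω h => by
      simp only [Prod.mk.injEq] at h; tauto) h0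
  -- P1 : W₂ ⟂ (Y₁,Y₂) | X  at the joint level
  have P1 : ∀ w x y₁ y₂,
      pr μ (fun ω => (W₂ ω, X ω, Y₁ ω, Y₂ ω)) (w, x, y₁, y₂) * pr μ X x
      = pr μ (fun ω => (W₂ ω, X ω)) (w, x) * pr μ (fun ω => (X ω, Y₁ ω, Y₂ ω)) (x, y₁, y₂) := by
    intro w x y₁ y₂
    rcases eq_or_ne (pr μ X x) 0 with hA0 | hA0
    · rw [zqA w x y₁ y₂ hA0, zCA w x hA0, zero_mul, zero_mul]
    rcases eq_or_ne (pr μ Y₁ y₁) 0 with hB0 | hB0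
    · rw [zqB w x y₁ y₂ hB0, zRB x y₁ y₂ hB0, zero_mul, mul_zero]
    have hs3 : pr μ (fun ω => (X ω, Y₁ ω, Y₂ ω)) (x, y₁, y₂) * (pr μ X x * pr μ Y₁ y₁)
        = pr μ X x * (pr μ (fun ω => (X ω, Y₁ ω)) (x, y₁)
            * pr μ (fun ω => (Y₁ ω, Y₂ ω)) (y₁, y₂)) := by
      have e1 : pr μ (fun ω => (X ω, Y₁ ω, Y₂ ω)) (x, y₁, y₂) * (pr μ X x * pr μ Y₁ y₁)
          = ∑ w', pr μ (fun ω => (W₂ ω, X ω)) (w', x) * pr μ (fun ω => (X ω, Y₁ ω)) (x, y₁)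
              * pr μ (fun ω => (Y₁ ω, Y₂ ω)) (y₁, y₂) := by
        rw [sR x y₁ y₂, Finset.sum_mul]
        apply Finset.sum_congr rfl
        intro w' _
        rw [← mul_assoc]
        exact hMarkov w' x y₁ y₂
      rw [e1]
      simp only [mul_assoc]
      rw [← Finset.sum_mul, ← sCA x]
    apply mul_right_cancel₀ (mul_ne_zero hA0 hB0)
    calc pr μ (fun ω => (W₂ ω, X ω, Y₁ ω, Y₂ ω)) (w, x, y₁, y₂) * pr μ X x
          * (pr μ X x * pr μ Y₁ y₁)
        = (pr μ (fun ω => (W₂ ω, X ω, Y₁ ω, Y₂ ω)) (w, x, y₁, y₂) * pr μ X x * pr μ Y₁ y₁)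
            * pr μ X x := by ring
      _ = (pr μ (fun ω => (W₂ ω, X ω)) (w, x) * pr μ (fun ω => (X ω, Y₁ ω)) (x, y₁)
            * pr μ (fun ω => (Y₁ ω, Y₂ ω)) (y₁, y₂)) * pr μ X x := by
          rw [hMarkov w x y₁ y₂]
      _ = pr μ (fun ω => (W₂ ω, X ω)) (w, x)
            * (pr μ (fun ω => (X ω, Y₁ ω, Y₂ ω)) (x, y₁, y₂) * (pr μ X x * pr μ Y₁ y₁)) := by
          rw [hs3]; ring
      _ = pr μ (fun ω => (W₂ ω, X ω)) (w, x) * pr μ (fun ω => (X ω, Y₁ ω, Y₂ ω)) (x, y₁, y₂)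
            * (pr μ X x * pr μ Y₁ y₁) := by ring
  have hGA : ∀ w x y₁, pr μ (fun ω => (W₂ ω, X ω, Y₁ ω)) (w, x, y₁) * pr μ X x
      = pr μ (fun ω => (W₂ ω, X ω)) (w, x) * pr μ (fun ω => (X ω, Y₁ ω)) (x, y₁) := by
    intro w x y₁
    have e1 : pr μ (fun ω => (W₂ ω, X ω, Y₁ ω)) (w, x, y₁) * pr μ X x
        = ∑ y₂, pr μ (fun ω => (W₂ ω, X ω)) (w, x)
            * pr μ (fun ω => (X ω, Y₁ ω, Y₂ ω)) (x, y₁, y₂) := by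
      rw [sG w x y₁, Finset.sum_mul]
      exact Finset.sum_congr rfl fun y₂ _ => P1 w x y₁ y₂
    rw [e1, ← Finset.mul_sum, ← sDR x y₁]
  have hKA : ∀ w x y₂, pr μ (fun ω => (W₂ ω, X ω, Y₂ ω)) (w, x, y₂) * pr μ X x
      = pr μ (fun ω => (W₂ ω, X ω)) (w, x) * pr μ (fun ω => (X ω, Y₂ ω)) (x, y₂) := by
    intro w x y₂
    have e1 : pr μ (fun ω => (W₂ ω, X ω, Y₂ ω)) (w, x, y₂) * pr μ X x
        = ∑ y₁, pr μ (fun ω => (W₂ ω, X ω)) (w, x)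
            * pr μ (fun ω => (X ω, Y₁ ω, Y₂ ω)) (x, y₁, y₂) := by
      rw [sK w x y₂, Finset.sum_mul]
      exact Finset.sum_congr rfl fun y₁ _ => P1 w x y₁ y₂
    rw [e1, ← Finset.mul_sum, ← sH x y₂]
  -- P2 : W₂ ⟂ Y₂ | (X,Y₁)
  have P2 : ∀ w x y₁ y₂,
      pr μ (fun ω => (W₂ ω, X ω, Y₁ ω, Y₂ ω)) (w, x, y₁, y₂) * pr μ (fun ω => (X ω, Y₁ ω)) (x, y₁)
      = pr μ (fun ω => (W₂ ω, X ω, Y₁ ω)) (w, x, y₁)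
        * pr μ (fun ω => (X ω, Y₁ ω, Y₂ ω)) (x, y₁, y₂) := by
    intro w x y₁ y₂
    rcases eq_or_ne (pr μ X x) 0 with hA0 | hA0
    · rw [zqA w x y₁ y₂ hA0, zGA w x y₁ hA0, zero_mul, zero_mul]
    apply mul_right_cancel₀ hA0
    calc pr μ (fun ω => (W₂ ω, X ω, Y₁ ω, Y₂ ω)) (w, x, y₁, y₂)
          * pr μ (fun ω => (X ω, Y₁ ω)) (x, y₁) * pr μ X x
        = (pr μ (fun ω => (W₂ ω, X ω, Y₁ ω, Y₂ ω)) (w, x, y₁, y₂) * pr μ X x)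
            * pr μ (fun ω => (X ω, Y₁ ω)) (x, y₁) := by ring
      _ = (pr μ (fun ω => (W₂ ω, X ω)) (w, x) * pr μ (fun ω => (X ω, Y₁ ω, Y₂ ω)) (x, y₁, y₂))
            * pr μ (fun ω => (X ω, Y₁ ω)) (x, y₁) := by rw [P1 w x y₁ y₂]
      _ = (pr μ (fun ω => (W₂ ω, X ω)) (w, x) * pr μ (fun ω => (X ω, Y₁ ω)) (x, y₁))
            * pr μ (fun ω => (X ω, Y₁ ω, Y₂ ω)) (x, y₁, y₂) := by ring
      _ = (pr μ (fun ω => (W₂ ω, X ω, Y₁ ω)) (w, x, y₁) * pr μ X x)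
            * pr μ (fun ω => (X ω, Y₁ ω, Y₂ ω)) (x, y₁, y₂) := by rw [← hGA w x y₁]
      _ = pr μ (fun ω => (W₂ ω, X ω, Y₁ ω)) (w, x, y₁)
            * pr μ (fun ω => (X ω, Y₁ ω, Y₂ ω)) (x, y₁, y₂) * pr μ X x := by ring
  -- P4 : W₂ ⟂ Y₁ | (X,Y₂)
  have P4 : ∀ w x y₁ y₂,
      pr μ (fun ω => (W₂ ω, X ω, Y₁ ω, Y₂ ω)) (w, x, y₁, y₂) * pr μ (fun ω => (X ω, Y₂ ω)) (x, y₂)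
      = pr μ (fun ω => (W₂ ω, X ω, Y₂ ω)) (w, x, y₂)
        * pr μ (fun ω => (X ω, Y₁ ω, Y₂ ω)) (x, y₁, y₂) := by
    intro w x y₁ y₂
    rcases eq_or_ne (pr μ X x) 0 with hA0 | hA0
    · rw [zqA w x y₁ y₂ hA0, zKA w x y₂ hA0, zero_mul, zero_mul]
    apply mul_right_cancel₀ hA0
    calc pr μ (fun ω => (W₂ ω, X ω, Y₁ ω, Y₂ ω)) (w, x, y₁, y₂)
          * pr μ (fun ω => (X ω, Y₂ ω)) (x, y₂) * pr μ X x
        = (pr μ (fun ω => (W₂ ω, X ω, Y₁ ω, Y₂ ω)) (w, x, y₁, y₂) * pr μ X x)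
            * pr μ (fun ω => (X ω, Y₂ ω)) (x, y₂) := by ring
      _ = (pr μ (fun ω => (W₂ ω, X ω)) (w, x) * pr μ (fun ω => (X ω, Y₁ ω, Y₂ ω)) (x, y₁, y₂))
            * pr μ (fun ω => (X ω, Y₂ ω)) (x, y₂) := by rw [P1 w x y₁ y₂]
      _ = (pr μ (fun ω => (W₂ ω, X ω)) (w, x) * pr μ (fun ω => (X ω, Y₂ ω)) (x, y₂))
            * pr μ (fun ω => (X ω, Y₁ ω, Y₂ ω)) (x, y₁, y₂) := by ring
      _ = (pr μ (fun ω => (W₂ ω, X ω, Y₂ ω)) (w, x, y₂) * pr μ X x)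
            * pr μ (fun ω => (X ω, Y₁ ω, Y₂ ω)) (x, y₁, y₂) := by rw [← hKA w x y₂]
      _ = pr μ (fun ω => (W₂ ω, X ω, Y₂ ω)) (w, x, y₂)
            * pr μ (fun ω => (X ω, Y₁ ω, Y₂ ω)) (x, y₁, y₂) * pr μ X x := by ring
  -- P3 : pointwise version of W₂ ⟂ Y₂ | Y₁ (before marginalizing x)
  have P3 : ∀ w x y₁ y₂,
      pr μ (fun ω => (W₂ ω, X ω, Y₁ ω, Y₂ ω)) (w, x, y₁, y₂) * pr μ Y₁ y₁
      = pr μ (fun ω => (W₂ ω, X ω, Y₁ ω)) (w, x, y₁)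
        * pr μ (fun ω => (Y₁ ω, Y₂ ω)) (y₁, y₂) := by
    intro w x y₁ y₂
    rcases eq_or_ne (pr μ X x) 0 with hA0 | hA0
    · rw [zqA w x y₁ y₂ hA0, zGA w x y₁ hA0, zero_mul, zero_mul]
    apply mul_right_cancel₀ hA0
    calc pr μ (fun ω => (W₂ ω, X ω, Y₁ ω, Y₂ ω)) (w, x, y₁, y₂) * pr μ Y₁ y₁ * pr μ X x
        = pr μ (fun ω => (W₂ ω, X ω, Y₁ ω, Y₂ ω)) (w, x, y₁, y₂) * pr μ X x * pr μ Y₁ y₁ := by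
          ring
      _ = pr μ (fun ω => (W₂ ω, X ω)) (w, x) * pr μ (fun ω => (X ω, Y₁ ω)) (x, y₁)
            * pr μ (fun ω => (Y₁ ω, Y₂ ω)) (y₁, y₂) := hMarkov w x y₁ y₂
      _ = (pr μ (fun ω => (W₂ ω, X ω, Y₁ ω)) (w, x, y₁) * pr μ X x)
            * pr μ (fun ω => (Y₁ ω, Y₂ ω)) (y₁, y₂) := by rw [← hGA w x y₁]
      _ = pr μ (fun ω => (W₂ ω, X ω, Y₁ ω)) (w, x, y₁)
            * pr μ (fun ω => (Y₁ ω, Y₂ ω)) (y₁, y₂) * pr μ X x := by ring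
  -- P5 : W₂ ⟂ Y₂ | Y₁
  have P5 : ∀ w y₁ y₂,
      pr μ (fun ω => (W₂ ω, Y₁ ω, Y₂ ω)) (w, y₁, y₂) * pr μ Y₁ y₁
      = pr μ (fun ω => (W₂ ω, Y₁ ω)) (w, y₁) * pr μ (fun ω => (Y₁ ω, Y₂ ω)) (y₁, y₂) := by
    intro w y₁ y₂
    rw [sM w y₁ y₂, Finset.sum_mul,
      show (∑ x, pr μ (fun ω => (W₂ ω, X ω, Y₁ ω, Y₂ ω)) (w, x, y₁, y₂) * pr μ Y₁ y₁)
        = ∑ x, pr μ (fun ω => (W₂ ω, X ω, Y₁ ω)) (w, x, y₁)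
            * pr μ (fun ω => (Y₁ ω, Y₂ ω)) (y₁, y₂)
        from Finset.sum_congr rfl fun x _ => P3 w x y₁ y₂,
      ← Finset.sum_mul, ← sN w y₁]
  -- the three vanishing conditional mutual informations
  have hz1 : cmi μ W₂ Y₂ (fun ω => (X ω, Y₁ ω)) = 0 := by
    apply cmi_eq_zero hμ
    rintro w y₂ ⟨x, y₁⟩
    show pr μ (fun ω => (W₂ ω, Y₂ ω, X ω, Y₁ ω)) (w, y₂, x, y₁)
        * pr μ (fun ω => (X ω, Y₁ ω)) (x, y₁)
      = pr μ (fun ω => (W₂ ω, X ω, Y₁ ω)) (w, x, y₁)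
        * pr μ (fun ω => (Y₂ ω, X ω, Y₁ ω)) (y₂, x, y₁)
    rw [r1 w x y₁ y₂, r2 x y₁ y₂]
    exact P2 w x y₁ y₂
  have hz2 : cmi μ W₂ Y₁ (fun ω => (X ω, Y₂ ω)) = 0 := by
    apply cmi_eq_zero hμ
    rintro w y₁ ⟨x, y₂⟩
    show pr μ (fun ω => (W₂ ω, Y₁ ω, X ω, Y₂ ω)) (w, y₁, x, y₂)
        * pr μ (fun ω => (X ω, Y₂ ω)) (x, y₂)
      = pr μ (fun ω => (W₂ ω, X ω, Y₂ ω)) (w, x, y₂)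
        * pr μ (fun ω => (Y₁ ω, X ω, Y₂ ω)) (y₁, x, y₂)
    rw [r3 w x y₁ y₂, r4 x y₁ y₂]
    exact P4 w x y₁ y₂
  have hz3 : cmi μ W₂ Y₂ Y₁ = 0 := by
    apply cmi_eq_zero hμ
    intro w y₂ y₁
    show pr μ (fun ω => (W₂ ω, Y₂ ω, Y₁ ω)) (w, y₂, y₁) * pr μ Y₁ y₁
      = pr μ (fun ω => (W₂ ω, Y₁ ω)) (w, y₁) * pr μ (fun ω => (Y₂ ω, Y₁ ω)) (y₂, y₁)
    rw [r5 w y₁ y₂, r6 y₁ y₂]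
    exact P5 w y₁ y₂
  have hpos : 0 ≤ cmi μ W₂ Y₁ Y₂ := cmi_nonneg hμ W₂ Y₁ Y₂
  -- the entropy identity
  have E1 : ent μ (fun ω => (X ω, W₂ ω, Y₂ ω)) = ent μ (fun ω => (W₂ ω, X ω, Y₂ ω)) :=
    ent_congr (fun ω => (W₂ ω, X ω, Y₂ ω)) (fun ω => (X ω, W₂ ω, Y₂ ω))
      ⟨fun t => (t.2.1, t.1, t.2.2), fun t => (t.2.1, t.1, t.2.2),
        fun t => rfl, fun t => rfl⟩ (fun ω => rfl)
  have E2 : ent μ (fun ω => (X ω, W₂ ω, Y₁ ω)) = ent μ (fun ω => (W₂ ω, X ω, Y₁ ω)) :=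
    ent_congr (fun ω => (W₂ ω, X ω, Y₁ ω)) (fun ω => (X ω, W₂ ω, Y₁ ω))
      ⟨fun t => (t.2.1, t.1, t.2.2), fun t => (t.2.1, t.1, t.2.2),
        fun t => rfl, fun t => rfl⟩ (fun ω => rfl)
  have E3 : ent μ (fun ω => (Y₁ ω, X ω, Y₂ ω)) = ent μ (fun ω => (Y₂ ω, X ω, Y₁ ω)) :=
    ent_congr (fun ω => (Y₂ ω, X ω, Y₁ ω)) (fun ω => (Y₁ ω, X ω, Y₂ ω))
      ⟨fun t => (t.2.2, t.2.1, t.1), fun t => (t.2.2, t.2.1, t.1),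
        fun t => rfl, fun t => rfl⟩ (fun ω => rfl)
  have E4 : ent μ (fun ω => (W₂ ω, Y₁ ω, X ω, Y₂ ω))
      = ent μ (fun ω => (W₂ ω, Y₂ ω, X ω, Y₁ ω)) :=
    ent_congr (fun ω => (W₂ ω, Y₂ ω, X ω, Y₁ ω)) (fun ω => (W₂ ω, Y₁ ω, X ω, Y₂ ω))
      ⟨fun t => (t.1, t.2.2.2, t.2.2.1, t.2.1), fun t => (t.1, t.2.2.2, t.2.2.1, t.2.1),
        fun t => rfl, fun t => rfl⟩ (fun ω => rfl)
  have E5 : ent μ (fun ω => (Y₂ ω, Y₁ ω)) = ent μ (fun ω => (Y₁ ω, Y₂ ω)) :=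
    ent_congr (fun ω => (Y₁ ω, Y₂ ω)) (fun ω => (Y₂ ω, Y₁ ω))
      ⟨fun t => (t.2, t.1), fun t => (t.2, t.1), fun t => rfl, fun t => rfl⟩ (fun ω => rfl)
  have E6 : ent μ (fun ω => (W₂ ω, Y₂ ω, Y₁ ω)) = ent μ (fun ω => (W₂ ω, Y₁ ω, Y₂ ω)) :=
    ent_congr (fun ω => (W₂ ω, Y₁ ω, Y₂ ω)) (fun ω => (W₂ ω, Y₂ ω, Y₁ ω))
      ⟨fun t => (t.1, t.2.2, t.2.1), fun t => (t.1, t.2.2, t.2.1),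
        fun t => rfl, fun t => rfl⟩ (fun ω => rfl)
  have hident : cmi μ X W₂ Y₂ - cmi μ X W₂ Y₁
      = cmi μ W₂ Y₁ Y₂ + cmi μ W₂ Y₂ (fun ω => (X ω, Y₁ ω))
        - cmi μ W₂ Y₁ (fun ω => (X ω, Y₂ ω)) - cmi μ W₂ Y₂ Y₁ := by
    simp only [cmi]
    rw [E1, E2, E3, E4, E5, E6]
    ring
  linarith [hident, hz1, hz2, hz3, hpos]


end SIScalable
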